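/- Let E, A ∈ ℂ^{n×n} and s₀ ∈ ℂ with s₀E − A invertible. Set D_E = (s₀E − A)^{-1}E. Suppose T̂ is an invertible matrix with T̂^{-1} D_E T̂ = diag(Ê₁, Ê₂), where Ê₁ ∈ ℂ^{n₁×n₁} is invertible and Ê₂ ∈ ℂ^{n₂×n₂} is nilpotent. Then s₀Ê₂ − I is invertible, and defining Q = diag(Ê₁^{-1}, (s₀Ê₂ − I)^{-1}) T̂^{-1} (s₀E − A)^{-1} and P = T̂, one has QEP = diag(I_{n₁}, (s₀Ê₂ − I)^{-1}Ê₂) and QAP = diag(s₀I_{n₁} − Ê₁^{-1}, I_{n₂}), where (s₀Ê₂ − I)^{-1}Ê₂ is nilpotent. -/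

import Mathlib

open Matrix

theorem stmt_9 {n₁ n₂ : ℕ}
    (E A T : Matrix (Fin n₁ ⊕ Fin n₂) (Fin n₁ ⊕ Fin n₂) ℂ) (s₀ : ℂ)
    (hreg : IsUnit (s₀ • E - A)) (hT : IsUnit T)
    (E₁ : Matrix (Fin n₁) (Fin n₁) ℂ) (E₂ : Matrix (Fin n₂) (Fin n₂) ℂ)
    (hE₁ : IsUnit E₁) (hE₂ : IsNilpotent E₂)
    (hdec : T⁻¹ * ((s₀ • E - A)⁻¹ * E) * T = Matrix.fromBlocks E₁ 0 0 E₂) :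
    IsUnit (s₀ • E₂ - 1) ∧
    (Matrix.fromBlocks E₁⁻¹ 0 0 (s₀ • E₂ - 1)⁻¹ * T⁻¹ * (s₀ • E - A)⁻¹) * E * T
        = Matrix.fromBlocks 1 0 0 ((s₀ • E₂ - 1)⁻¹ * E₂) ∧
    (Matrix.fromBlocks E₁⁻¹ 0 0 (s₀ • E₂ - 1)⁻¹ * T⁻¹ * (s₀ • E - A)⁻¹) * A * T
        = Matrix.fromBlocks (s₀ • (1 : Matrix (Fin n₁) (Fin n₁) ℂ) - E₁⁻¹) 0 0 1 ∧
    IsNilpotent ((s₀ • E₂ - 1)⁻¹ * E₂) := by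
  have hnil : IsNilpotent (s₀ • E₂) := hE₂.smul s₀
  have hu : IsUnit (s₀ • E₂ - 1) := hnil.isUnit_sub_one
  have hudet : IsUnit (s₀ • E₂ - 1).det := (Matrix.isUnit_iff_isUnit_det _).mp hu
  have hE₁det : IsUnit E₁.det := (Matrix.isUnit_iff_isUnit_det _).mp hE₁
  have hTdet : IsUnit T.det := (Matrix.isUnit_iff_isUnit_det _).mp hT
  have hSdet : IsUnit (s₀ • E - A).det := (Matrix.isUnit_iff_isUnit_det _).mp hreg
  set S := s₀ • E - A with hS
  -- key consequence of hdec
  have h1 : S⁻¹ * E * T = T * Matrix.fromBlocks E₁ 0 0 E₂ := by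
    have := congrArg (T * ·) hdec
    simpa [Matrix.mul_assoc, Matrix.mul_nonsing_inv_cancel_left _ _ hTdet] using this
  -- commute for nilpotency
  have hcomm : Commute ((s₀ • E₂ - 1)⁻¹) E₂ := by
    have hc : Commute (s₀ • E₂ - 1) E₂ :=
      Commute.sub_left ((Commute.refl E₂).smul_left s₀) (Commute.one_left E₂)
    rw [← hu.unit_spec] at hc
    simpa [Matrix.coe_units_inv] using hc.units_inv_left
  have hblk : s₀ • Matrix.fromBlocks E₁ 0 0 E₂ - 1
      = Matrix.fromBlocks (s₀ • E₁ - 1) 0 0 (s₀ • E₂ - 1) := by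
    rw [sub_eq_add_neg, ← Matrix.fromBlocks_one, Matrix.fromBlocks_smul,
      Matrix.fromBlocks_neg, Matrix.fromBlocks_add]
    simp [sub_eq_add_neg]
  refine ⟨hu, ?_, ?_, ?_⟩
  · calc (Matrix.fromBlocks E₁⁻¹ 0 0 (s₀ • E₂ - 1)⁻¹ * T⁻¹ * S⁻¹) * E * T
        = Matrix.fromBlocks E₁⁻¹ 0 0 (s₀ • E₂ - 1)⁻¹ * (T⁻¹ * (S⁻¹ * E * T)) := by
          simp [Matrix.mul_assoc]
      _ = Matrix.fromBlocks E₁⁻¹ 0 0 (s₀ • E₂ - 1)⁻¹ *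
            Matrix.fromBlocks E₁ 0 0 E₂ := by
          rw [h1, Matrix.nonsing_inv_mul_cancel_left _ _ hTdet]
      _ = Matrix.fromBlocks 1 0 0 ((s₀ • E₂ - 1)⁻¹ * E₂) := by
          simp [Matrix.fromBlocks_multiply, Matrix.nonsing_inv_mul _ hE₁det]
  · have hA : S⁻¹ * A * T = T * Matrix.fromBlocks (s₀ • E₁ - 1) 0 0 (s₀ • E₂ - 1) := by
      have hAe : A = s₀ • E - S := by exact (sub_sub_cancel _ _).symm
      rw [hAe]
      have : S⁻¹ * (s₀ • E - S) * T = s₀ • (S⁻¹ * E * T) - T := by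
        rw [Matrix.mul_sub, Matrix.sub_mul, mul_smul_comm,
          Matrix.nonsing_inv_mul _ hSdet, Matrix.one_mul, smul_mul_assoc]
      rw [this, h1, ← hblk, Matrix.mul_sub, Matrix.mul_one, mul_smul_comm]
    calc (Matrix.fromBlocks E₁⁻¹ 0 0 (s₀ • E₂ - 1)⁻¹ * T⁻¹ * S⁻¹) * A * T
        = Matrix.fromBlocks E₁⁻¹ 0 0 (s₀ • E₂ - 1)⁻¹ * (T⁻¹ * (S⁻¹ * A * T)) := by
          simp [Matrix.mul_assoc]
      _ = Matrix.fromBlocks E₁⁻¹ 0 0 (s₀ • E₂ - 1)⁻¹ *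
            Matrix.fromBlocks (s₀ • E₁ - 1) 0 0 (s₀ • E₂ - 1) := by
          rw [hA, Matrix.nonsing_inv_mul_cancel_left _ _ hTdet]
      _ = Matrix.fromBlocks (s₀ • (1 : Matrix (Fin n₁) (Fin n₁) ℂ) - E₁⁻¹) 0 0 1 := by
          simp [Matrix.fromBlocks_multiply, Matrix.nonsing_inv_mul _ hudet,
            Matrix.mul_sub, mul_smul_comm, Matrix.nonsing_inv_mul _ hE₁det]
  · exact hcomm.isNilpotent_mul_left hE₂
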